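/- If M is a doubly stochastic d×d matrix and x ∈ ℝ^d, then M x is majorised by x. Conversely (Hardy–Littlewood–Pólya), if y ≺ x then there exists a doubly stochastic M with y = M x. -/

import Mathlib

open Finset Matrix

/-- The entries of `x` sorted in decreasing order. -/
noncomputable def sortDesc {n : ℕ} (x : Fin n → ℝ) : Fin n → ℝ :=
  fun i => x (Tuple.sort x i.rev)

/-- Sum of the `k` largest entries of `x`. -/
noncomputable def topSum {n : ℕ} (x : Fin n → ℝ) (k : ℕ) : ℝ :=
  ∑ i ∈ Finset.univ.filter (fun i : Fin n => (i : ℕ) < k), sortDesc x i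

/-- `y ≺ x`: `y` is majorised by `x`. -/
def Majorizes {n : ℕ} (y x : Fin n → ℝ) : Prop :=
  (∀ k : ℕ, topSum y k ≤ topSum x k) ∧ (∑ i, y i = ∑ i, x i)

/-- A doubly stochastic matrix: nonnegative entries, all row and column sums equal `1`. -/
def DoublyStochastic {n : ℕ} (M : Matrix (Fin n) (Fin n) ℝ) : Prop :=
  (∀ i j, 0 ≤ M i j) ∧ (∀ i, ∑ j, M i j = 1) ∧ (∀ j, ∑ i, M i j = 1)

section Helpers

variable {n : ℕ}

/-- The permutation such that `sortDesc z = z ∘ sortEquiv z`. -/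
noncomputable def sortEquiv (z : Fin n → ℝ) : Equiv.Perm (Fin n) :=
  Fin.revPerm.trans (Tuple.sort z)

lemma sortDesc_eq (z : Fin n → ℝ) (i : Fin n) : sortDesc z i = z (sortEquiv z i) := rfl

lemma sortDesc_antitone (z : Fin n → ℝ) : Antitone (sortDesc z) := by
  intro i j hij
  have h : j.rev ≤ i.rev := Fin.rev_le_rev.mpr hij
  exact Tuple.monotone_sort z h

lemma card_filter_lt (k : ℕ) :
    (Finset.univ.filter (fun i : Fin n => (i : ℕ) < k)).card = min k n := by
  have : (Finset.univ.filter (fun i : Fin n => (i : ℕ) < k)) =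
      (Finset.range (min k n)).attachFin (fun m hm => by
        simp only [Finset.mem_range] at hm; omega) := by
    ext i
    simp only [Finset.mem_filter, Finset.mem_univ, true_and, Finset.mem_attachFin,
      Finset.mem_range]
    omega
  rw [this, Finset.card_attachFin, Finset.card_range]

lemma strictMono_le {k : ℕ} (u : Fin k → Fin n) (hu : StrictMono u) :
    ∀ m (h : m < k), m ≤ (u ⟨m, h⟩ : ℕ) := by
  intro m
  induction m with
  | zero => intro h; exact Nat.zero_le _
  | succ m ih =>
    intro h
    have h1 : m < k := Nat.lt_of_succ_lt h
    have h2 : u ⟨m, h1⟩ < u ⟨m + 1, h⟩ := hu (by simp [Fin.mk_lt_mk])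
    have h3 := ih h1
    have h4 : (u ⟨m, h1⟩ : ℕ) < (u ⟨m + 1, h⟩ : ℕ) := h2
    omega

lemma sum_le_sum_filter_of_antitone {f : Fin n → ℝ} (hf : Antitone f) (T : Finset (Fin n)) :
    ∑ j ∈ T, f j ≤ ∑ j ∈ Finset.univ.filter (fun i : Fin n => (i : ℕ) < T.card), f j := by
  classical
  have hkn : T.card ≤ n := by simpa using T.card_le_univ
  set u := T.orderEmbOfFin (rfl : T.card = T.card) with hu
  have himg : Finset.image (fun i : Fin T.card => u i) Finset.univ = T := by
    ext j
    simp only [Finset.mem_image, Finset.mem_univ, true_and]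
    constructor
    · rintro ⟨i, rfl⟩; exact T.orderEmbOfFin_mem rfl i
    · intro hj
      have hj2 : j ∈ Set.range ⇑(T.orderEmbOfFin (rfl : T.card = T.card)) := by
        rw [Finset.range_orderEmbOfFin]
        exact hj
      obtain ⟨i, hi⟩ := hj2
      exact ⟨i, hi⟩
  have hT : ∑ j ∈ T, f j = ∑ i : Fin T.card, f (u i) := by
    have h5 : ∑ j ∈ Finset.image (fun i : Fin T.card => u i) Finset.univ, f j
        = ∑ i : Fin T.card, f (u i) :=
      Finset.sum_image (fun a _ b _ hab => u.injective hab)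
    rw [himg] at h5
    exact h5
  have hfilter : (Finset.univ.filter (fun i : Fin n => (i : ℕ) < T.card)) =
      Finset.univ.image (Fin.castLE hkn) := by
    ext j
    simp only [Finset.mem_filter, Finset.mem_univ, true_and, Finset.mem_image]
    constructor
    · intro hj; exact ⟨⟨(j : ℕ), hj⟩, rfl⟩
    · rintro ⟨i, rfl⟩; exact i.isLt
  rw [hT, hfilter, Finset.sum_image (by
    intro a _ b _ hab
    exact Fin.castLE_injective hkn hab)]
  apply Finset.sum_le_sum
  intro i _
  apply hf
  have := strictMono_le u ((T.orderEmbOfFin rfl).strictMono) i i.isLt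
  exact Fin.le_def.mpr (by simpa using this)

lemma topSum_eq_sum_image (z : Fin n → ℝ) (k : ℕ) :
    topSum z k = ∑ j ∈ (Finset.univ.filter (fun i : Fin n => (i : ℕ) < k)).image
      (sortEquiv z), z j := by
  rw [Finset.sum_image (by intro a _ b _ h; exact (sortEquiv z).injective h)]
  rfl

lemma sum_le_topSum (z : Fin n → ℝ) (S : Finset (Fin n)) :
    ∑ i ∈ S, z i ≤ topSum z S.card := by
  classical
  have h1 : ∑ i ∈ S, z i = ∑ j ∈ S.image (sortEquiv z).symm, sortDesc z j := by
    rw [Finset.sum_image (by intro a _ b _ h; exact (sortEquiv z).symm.injective h)]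
    refine Finset.sum_congr rfl fun i _ => ?_
    rw [sortDesc_eq, Equiv.apply_symm_apply]
  rw [h1]
  have h2 := sum_le_sum_filter_of_antitone (sortDesc_antitone z) (S.image (sortEquiv z).symm)
  rwa [Finset.card_image_of_injective _ (sortEquiv z).symm.injective] at h2

lemma topSum_min (z : Fin n → ℝ) (k : ℕ) : topSum z k = topSum z (min k n) := by
  unfold topSum
  congr 1
  ext i
  simp only [Finset.mem_filter, Finset.mem_univ, true_and]
  have := i.isLt
  omega

lemma topSum_zero (z : Fin n → ℝ) : topSum z 0 = 0 := by
  unfold topSum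
  rw [Finset.sum_eq_zero]
  intro i hi
  simp at hi

lemma topSum_top (z : Fin n → ℝ) : topSum z n = ∑ i, z i := by
  unfold topSum
  have : (Finset.univ.filter (fun i : Fin n => (i : ℕ) < n)) = Finset.univ := by
    ext i; simp [i.isLt]
  rw [this]
  simp_rw [sortDesc_eq]
  exact Equiv.sum_comp (sortEquiv z) z

lemma topSum_succ (z : Fin n → ℝ) (k : ℕ) (hk : k < n) :
    topSum z (k + 1) = topSum z k + sortDesc z ⟨k, hk⟩ := by
  unfold topSum
  have : (Finset.univ.filter (fun i : Fin n => (i : ℕ) < k + 1)) =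
      insert ⟨k, hk⟩ (Finset.univ.filter (fun i : Fin n => (i : ℕ) < k)) := by
    ext i
    simp only [Finset.mem_filter, Finset.mem_univ, true_and, Finset.mem_insert, Fin.ext_iff]
    omega
  rw [this, Finset.sum_insert (by simp)]
  ring

end Helpers

section Dir1

lemma dir1 {n : ℕ} (M : Matrix (Fin n) (Fin n) ℝ) (x : Fin n → ℝ)
    (hM : DoublyStochastic M) : Majorizes (M.mulVec x) x := by
  classical
  obtain ⟨hpos, hrow, hcol⟩ := hM
  constructor
  · intro k
    obtain ⟨w, hw0, hw1, hwM⟩ := exists_eq_sum_perm_of_mem_doublyStochastic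
      (mem_doublyStochastic_iff_sum.mpr ⟨hpos, hrow, hcol⟩)
    have hMx : ∀ i, M.mulVec x i = ∑ σ : Equiv.Perm (Fin n), w σ * x (σ i) := by
      intro i
      rw [← hwM]
      simp only [mulVec, dotProduct, Matrix.sum_apply, Matrix.smul_apply,
        Equiv.Perm.permMatrix, PEquiv.toMatrix_apply, Equiv.toPEquiv_apply,
        Option.mem_def, Option.some.injEq, smul_eq_mul]
      simp_rw [Finset.sum_mul]
      rw [Finset.sum_comm]
      refine Finset.sum_congr rfl fun σ _ => ?_
      simp [mul_ite, ite_mul, Finset.sum_ite_eq]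
    set S := (Finset.univ.filter (fun i : Fin n => (i : ℕ) < k)).image
      (sortEquiv (M.mulVec x)) with hS
    have hcard : S.card = min k n := by
      rw [hS, Finset.card_image_of_injective _ (sortEquiv (M.mulVec x)).injective,
        card_filter_lt]
    rw [topSum_eq_sum_image (M.mulVec x) k, ← hS]
    calc ∑ i ∈ S, M.mulVec x i
        = ∑ σ : Equiv.Perm (Fin n), w σ * ∑ i ∈ S, x (σ i) := by
          simp_rw [hMx]
          rw [Finset.sum_comm]
          simp_rw [Finset.mul_sum]
      _ ≤ ∑ σ : Equiv.Perm (Fin n), w σ * topSum x k := by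
          apply Finset.sum_le_sum
          intro σ _
          apply mul_le_mul_of_nonneg_left _ (hw0 σ)
          have heq : ∑ i ∈ S, x (σ i) = ∑ j ∈ S.image σ, x j :=
            (Finset.sum_image (by intro a _ b _ h; exact σ.injective h)).symm
          rw [heq]
          have h2 := sum_le_topSum x (S.image σ)
          rwa [Finset.card_image_of_injective _ σ.injective, hcard, ← topSum_min] at h2
      _ = topSum x k := by rw [← Finset.sum_mul, hw1, one_mul]
  · calc ∑ i, M.mulVec x i = ∑ j, (∑ i, M i j) * x j := by
          simp only [mulVec, dotProduct]
          rw [Finset.sum_comm]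
          simp_rw [Finset.sum_mul]
      _ = ∑ j, x j := by
          refine Finset.sum_congr rfl fun j _ => ?_
          rw [hcol j, one_mul]

end Dir1

section Dir2

lemma abel_aux (C : ℕ → ℝ) (hC : Antitone C) (g : ℕ → ℝ) (hg : ∀ k, g k ≤ 0)
    (hg0 : g 0 = 0) : ∀ N, ∑ i ∈ Finset.range N, C i * (g (i + 1) - g i) ≤ C N * g N := by
  intro N
  induction N with
  | zero => simp [hg0]
  | succ N ih =>
    rw [Finset.sum_range_succ]
    have h2 : C N * g (N + 1) ≤ C (N + 1) * g (N + 1) :=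
      mul_le_mul_of_nonpos_right (hC (Nat.le_succ N)) (hg _)
    nlinarith [ih]

lemma dir2 {n : ℕ} (x y : Fin n → ℝ) (h : Majorizes y x) :
    ∃ M : Matrix (Fin n) (Fin n) ℝ, DoublyStochastic M ∧ y = M.mulVec x := by
  classical
  by_cases hn : n = 0
  · subst hn
    exact ⟨1, ⟨fun i => i.elim0, fun i => i.elim0, fun i => i.elim0⟩, funext fun i => i.elim0⟩
  set K : Set (Fin n → ℝ) := convexHull ℝ (Set.range fun σ : Equiv.Perm (Fin n) => x ∘ ⇑σ)
    with hKdef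
  have hyK : y ∈ K := by
    by_contra hyK
    have hKcl : IsClosed K := (Set.finite_range _).isClosed_convexHull (𝕜 := ℝ)
    obtain ⟨f, u, hfu, huy⟩ :=
      geometric_hahn_banach_closed_point (convex_convexHull ℝ _) hKcl hyK
    set c : Fin n → ℝ := fun i => f (fun j => if i = j then (1 : ℝ) else 0) with hc
    have hf : ∀ v : Fin n → ℝ, f v = ∑ i, v i * c i := by
      intro v
      conv_lhs => rw [pi_eq_sum_univ v, map_sum]
      refine Finset.sum_congr rfl fun i _ => ?_
      rw [_root_.map_smul, smul_eq_mul]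
    set Ec := sortEquiv c
    set Ey := sortEquiv y
    set Ex := sortEquiv x
    set π : Equiv.Perm (Fin n) := Ec.trans Ey.symm with hπ
    set σ₀ : Equiv.Perm (Fin n) := Ec.symm.trans Ex with hσ₀
    have mono : Monovary (sortDesc c) (sortDesc y) := by
      intro i j hg
      rcases le_total j i with hji | hij
      · exact sortDesc_antitone c hji
      · exact absurd hg (not_lt.mpr (sortDesc_antitone y hij))
    have h_rearr : ∑ i, sortDesc c i * sortDesc y (π i) ≤
        ∑ i, sortDesc c i * sortDesc y i := by
      simpa [smul_eq_mul] using mono.sum_smul_comp_perm_le_sum_smul (σ := π)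
    have h_fy : f y = ∑ i, sortDesc c i * sortDesc y (π i) := by
      rw [hf y]
      rw [← Equiv.sum_comp Ec (fun i => y i * c i)]
      refine Finset.sum_congr rfl fun j _ => ?_
      rw [mul_comm]
      congr 1
      rw [sortDesc_eq y]
      congr 1
      show Ec j = Ey (Ey.symm (Ec j))
      rw [Equiv.apply_symm_apply]
    have h_abel : ∑ i, sortDesc c i * sortDesc y i ≤ ∑ i, sortDesc c i * sortDesc x i := by
      set m := n - 1 with hm
      set C : ℕ → ℝ := fun k => sortDesc c ⟨min k m, by omega⟩ with hC
      have hCanti : Antitone C := by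
        intro a b hab
        apply sortDesc_antitone
        exact Fin.mk_le_mk.mpr (by omega)
      set g : ℕ → ℝ := fun k => topSum y k - topSum x k with hgdef
      have hg : ∀ k, g k ≤ 0 := fun k => sub_nonpos.mpr (h.1 k)
      have hg0 : g 0 = 0 := by simp [hgdef, topSum_zero]
      have hgn : g n = 0 := by
        simp only [hgdef, topSum_top]
        rw [h.2]; ring
      have key := abel_aux C hCanti g hg hg0 n
      rw [hgn, mul_zero] at key
      have hLHS : ∑ i ∈ Finset.range n, C i * (g (i + 1) - g i) =
          ∑ i : Fin n, sortDesc c i * (sortDesc y i - sortDesc x i) := by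
        rw [← Fin.sum_univ_eq_sum_range (fun i => C i * (g (i + 1) - g i)) n]
        refine Finset.sum_congr rfl fun i _ => ?_
        have hiv : i.val < n := i.isLt
        have hCeq : C i.val = sortDesc c i := by
          simp only [hC]
          congr 1
          exact Fin.ext (by simp; omega)
        have hgy : topSum y (i.val + 1) = topSum y i.val + sortDesc y i := by
          rw [topSum_succ y i.val hiv]
        have hgx : topSum x (i.val + 1) = topSum x i.val + sortDesc x i := by
          rw [topSum_succ x i.val hiv]
        rw [hCeq]
        simp only [hgdef, hgy, hgx]
        ring
      rw [hLHS] at key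
      have : ∑ i : Fin n, sortDesc c i * (sortDesc y i - sortDesc x i) =
          ∑ i, sortDesc c i * sortDesc y i - ∑ i, sortDesc c i * sortDesc x i := by
        rw [← Finset.sum_sub_distrib]
        refine Finset.sum_congr rfl fun i _ => ?_
        ring
      linarith [key, this ▸ key]
    have h_last : ∑ i, sortDesc c i * sortDesc x i = f (x ∘ ⇑σ₀) := by
      rw [hf (x ∘ ⇑σ₀)]
      rw [← Equiv.sum_comp Ec (fun i => (x ∘ ⇑σ₀) i * c i)]
      refine Finset.sum_congr rfl fun j _ => ?_
      rw [mul_comm]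
      congr 1
      show sortDesc x j = x (Ex (Ec.symm (Ec j)))
      rw [Equiv.symm_apply_apply]
      exact sortDesc_eq x j
    have hmem : x ∘ ⇑σ₀ ∈ K := subset_convexHull ℝ _ ⟨σ₀, rfl⟩
    have := hfu _ hmem
    linarith [h_rearr, h_abel, h_fy ▸ le_trans h_rearr h_abel]
  -- extract the doubly stochastic matrix from `y ∈ K`
  set t : Finset (Fin n → ℝ) :=
    Finset.univ.image (fun σ : Equiv.Perm (Fin n) => x ∘ ⇑σ) with ht
  have hKt : K = convexHull ℝ (t : Set (Fin n → ℝ)) := by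
    rw [hKdef, ht]
    congr 1
    simp [Set.image_univ]
  rw [hKt, Finset.mem_convexHull'] at hyK
  obtain ⟨w, hw0, hw1, hwy⟩ := hyK
  have hpick : ∀ v : {v // v ∈ t}, ∃ σ : Equiv.Perm (Fin n), x ∘ ⇑σ = v.1 := by
    intro v
    obtain ⟨σ, -, hσ⟩ := Finset.mem_image.mp v.2
    exact ⟨σ, hσ⟩
  choose pick pick_spec using hpick
  set M : Matrix (Fin n) (Fin n) ℝ :=
    ∑ v ∈ t.attach, w v.1 • Matrix.of (fun i j => if pick v i = j then (1 : ℝ) else 0)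
    with hMdef
  have hentry : ∀ i j, M i j =
      ∑ v ∈ t.attach, w v.1 * (if pick v i = j then (1 : ℝ) else 0) := by
    intro i j
    rw [hMdef]
    simp [Matrix.sum_apply]
  refine ⟨M, ⟨?_, ?_, ?_⟩, ?_⟩
  · intro i j
    rw [hentry]
    apply Finset.sum_nonneg
    intro v _
    apply mul_nonneg (hw0 v.1 v.2)
    split <;> norm_num
  · intro i
    simp_rw [hentry]
    rw [Finset.sum_comm]
    have : ∀ v ∈ t.attach, ∑ j, w v.1 * (if pick v i = j then (1 : ℝ) else 0)
        = w v.1 := by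
      intro v _
      rw [← Finset.mul_sum]
      rw [Finset.sum_ite_eq Finset.univ (pick v i) (fun _ => (1 : ℝ))]
      simp
    rw [Finset.sum_congr rfl this, ← hw1, Finset.sum_attach t w]
  · intro j
    simp_rw [hentry]
    rw [Finset.sum_comm]
    have : ∀ v ∈ t.attach, ∑ i, w v.1 * (if pick v i = j then (1 : ℝ) else 0)
        = w v.1 := by
      intro v _
      rw [← Finset.mul_sum]
      have : ∀ i, (pick v i = j) = (i = (pick v).symm j) := by
        intro i
        simp [Equiv.apply_eq_iff_eq_symm_apply]
      simp_rw [this]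
      rw [Finset.sum_ite_eq' Finset.univ ((pick v).symm j) (fun _ => (1 : ℝ))]
      simp
    rw [Finset.sum_congr rfl this, ← hw1, Finset.sum_attach t w]
  · funext i
    have h1 : M.mulVec x i = ∑ v ∈ t.attach, w v.1 * x (pick v i) := by
      simp only [mulVec, dotProduct]
      simp_rw [hentry, Finset.sum_mul]
      rw [Finset.sum_comm]
      refine Finset.sum_congr rfl fun v _ => ?_
      simp [ite_mul, mul_ite, Finset.sum_ite_eq]
    rw [h1]
    have h3 : ∑ v ∈ t.attach, w v.1 * x (pick v i) =
        ∑ v ∈ t.attach, w v.1 * v.1 i := by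
      refine Finset.sum_congr rfl fun v _ => ?_
      congr 1
      have := congrFun (pick_spec v) i
      simpa using this
    rw [h3, Finset.sum_attach t (fun v => w v * v i)]
    have := congrFun hwy i
    simp only [Finset.sum_apply, Pi.smul_apply, smul_eq_mul] at this
    exact this.symm

end Dir2

/-- `Mx ≺ x` for doubly stochastic `M`; conversely (Hardy–Littlewood–Pólya), `y ≺ x` iff
`y = Mx` for some doubly stochastic `M`. -/
theorem doublyStochastic_majorisation {n : ℕ} :
    (∀ (M : Matrix (Fin n) (Fin n) ℝ) (x : Fin n → ℝ),
      DoublyStochastic M → Majorizes (M.mulVec x) x) ∧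
    (∀ x y : Fin n → ℝ, Majorizes y x →
      ∃ M : Matrix (Fin n) (Fin n) ℝ, DoublyStochastic M ∧ y = M.mulVec x) := by
  exact ⟨dir1, dir2⟩
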